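/- arXiv:2107.11926 — 4 statements merged into one kernel-verified Lean document; each statement's English description precedes it below -/
import Mathlib

section
/- Let R be an order in a central simple algebra S. Then R is a maximal order if and only if for every nonzero z ∈ Z(R) and every ring R' with R ⊆ R' ⊆ (1/z)R := { x z^{-1} | x ∈ R }, one has R' = R. -/
/-- `R` is an order in `S`: every `x ∈ S` can be written as `a b⁻¹` and as
`c⁻¹ d` with `a, b, c, d ∈ R` (the inverses taken in `S`). -/
def IsOrderIn {S : Type*} [Ring S] (R : Subring S) : Prop :=
  ∀ x : S,
    (∃ a b bi : S, a ∈ R ∧ b ∈ R ∧ b * bi = 1 ∧ bi * b = 1 ∧ x = a * bi) ∧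
    (∃ c d ci : S, c ∈ R ∧ d ∈ R ∧ c * ci = 1 ∧ ci * c = 1 ∧ x = ci * d)

/-- Two orders `R, R'` of `S` are equivalent if `a R b ⊆ R'` and `a' R' b' ⊆ R`
for some units `a, b, a', b'` of `S`. -/
def OrderEquivIn {S : Type*} [Ring S] (R R' : Subring S) : Prop :=
  (∃ a b : Sˣ, ∀ r ∈ R, (a : S) * r * (b : S) ∈ R') ∧
  (∃ a b : Sˣ, ∀ r ∈ R', (a : S) * r * (b : S) ∈ R)

/-- A maximal order is an order which is maximal, with respect to inclusion,
in its equivalence class of orders. -/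
def IsMaximalOrderIn {S : Type*} [Ring S] (R : Subring S) : Prop :=
  IsOrderIn R ∧
  ∀ R' : Subring S, IsOrderIn R' → OrderEquivIn R R' → R ≤ R' → R' = R


namespace Statement3Aux

variable {Q S : Type*} [Field Q] [Ring S] [Algebra Q S]

section Denoms

variable {R : Subring S}

/-- common right denominators -/
lemma right_denom_list (hR : IsOrderIn R) (l : List S) :
    ∃ b bi : S, b ∈ R ∧ b * bi = 1 ∧ bi * b = 1 ∧ ∀ x ∈ l, x * b ∈ R := by
  induction l with
  | nil => exact ⟨1, 1, R.one_mem, one_mul 1, one_mul 1, by simp⟩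
  | cons x l ih =>
    obtain ⟨b₂, b₂i, hb₂, h₂1, h₂2, hl⟩ := ih
    obtain ⟨⟨a₁, b₁, b₁i, ha₁, hb₁, h₁1, h₁2, hx⟩, -⟩ := hR x
    obtain ⟨⟨a', b', b'i, ha', hb', h'1, h'2, hu⟩, -⟩ := hR (b₁i * b₂)
    -- b₁i * b₂ * b' = a', so b₂ * b' = b₁ * a'
    have key : b₂ * b' = b₁ * a' := by
      have : b₁ * ((b₁i * b₂) * b') = b₁ * (a' * b'i * b') := by rw [← hu]
      calc b₂ * b' = (b₁ * b₁i) * (b₂ * b') := by rw [h₁1, one_mul]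
        _ = b₁ * ((b₁i * b₂) * b') := by simp only [mul_assoc]
        _ = b₁ * (a' * b'i * b') := this
        _ = b₁ * (a' * (b'i * b')) := by rw [mul_assoc]
        _ = b₁ * a' := by rw [h'2, mul_one]
    refine ⟨b₂ * b', b'i * b₂i, R.mul_mem hb₂ hb', ?_, ?_, ?_⟩
    · calc b₂ * b' * (b'i * b₂i) = b₂ * (b' * b'i) * b₂i := by simp only [mul_assoc]
        _ = b₂ * b₂i := by rw [h'1, mul_one]
        _ = 1 := h₂1
    · calc b'i * b₂i * (b₂ * b') = b'i * (b₂i * b₂) * b' := by simp only [mul_assoc]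
        _ = b'i * b' := by rw [h₂2, mul_one]
        _ = 1 := h'2
    · intro y hy
      rcases List.mem_cons.mp hy with rfl | hy
    
      · have : y * (b₂ * b') = a₁ * a' := by
          rw [key, hx]
          calc a₁ * b₁i * (b₁ * a') = a₁ * (b₁i * b₁) * a' := by simp only [mul_assoc]
            _ = a₁ * a' := by rw [h₁2, mul_one]
        rw [this]; exact R.mul_mem ha₁ ha'
      · have : y * (b₂ * b') = (y * b₂) * b' := by rw [mul_assoc]
        rw [this]; exact R.mul_mem (hl y hy) hb'

/-- common left denominators -/
lemma left_denom_list (hR : IsOrderIn R) (l : List S) :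
    ∃ c ci : S, c ∈ R ∧ c * ci = 1 ∧ ci * c = 1 ∧ ∀ x ∈ l, c * x ∈ R := by
  induction l with
  | nil => exact ⟨1, 1, R.one_mem, one_mul 1, one_mul 1, by simp⟩
  | cons x l ih =>
    obtain ⟨c₂, c₂i, hc₂, h₂1, h₂2, hl⟩ := ih
    obtain ⟨-, ⟨c₁, d₁, c₁i, hc₁, hd₁, h₁1, h₁2, hx⟩⟩ := hR x
    obtain ⟨-, ⟨c', d', c'i, hc', hd', h'1, h'2, hu⟩⟩ := hR (c₂ * c₁i)
    -- c' * (c₂ * c₁i) = d', so c' * c₂ = d' * c₁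
    have key : c' * c₂ = d' * c₁ := by
      have h0 : c' * (c₂ * c₁i) = d' := by
        rw [hu]; calc c' * (c'i * d') = (c' * c'i) * d' := by rw [mul_assoc]
          _ = d' := by rw [h'1, one_mul]
      calc c' * c₂ = c' * (c₂ * c₁i) * c₁ := by
            simp only [mul_assoc, h₁2, mul_one]
        _ = d' * c₁ := by rw [h0]
    refine ⟨c' * c₂, c₂i * c'i, R.mul_mem hc' hc₂, ?_, ?_, ?_⟩
    · calc c' * c₂ * (c₂i * c'i) = c' * (c₂ * c₂i) * c'i := by simp only [mul_assoc]
        _ = c' * c'i := by rw [h₂1, mul_one]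
        _ = 1 := h'1
    · calc c₂i * c'i * (c' * c₂) = c₂i * (c'i * c') * c₂ := by simp only [mul_assoc]
        _ = c₂i * c₂ := by rw [h'2, mul_one]
        _ = 1 := h₂2
    · intro y hy
      rcases List.mem_cons.mp hy with rfl | hy
      · have : (c' * c₂) * y = d' * d₁ := by
          rw [hx, key]
          calc d' * c₁ * (c₁i * d₁) = d' * (c₁ * c₁i) * d₁ := by simp only [mul_assoc]
            _ = d' * d₁ := by rw [h₁1, mul_one]
        rw [this]; exact R.mul_mem hd' hd₁
      · have : (c' * c₂) * y = c' * (c₂ * y) := by rw [mul_assoc]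
        rw [this]; exact R.mul_mem hc' (hl y hy)

end Denoms

section SpanTop

variable {Q S : Type*} [Field Q] [Ring S] [Algebra Q S] [FiniteDimensional Q S]
variable {R : Subring S}

omit [FiniteDimensional Q S] in
lemma mul_left_span (a : S) (ha : a ∈ R) {v : S}
    (hv : v ∈ Submodule.span Q (R : Set S)) : a * v ∈ Submodule.span Q (R : Set S) := by
  induction hv using Submodule.span_induction with
  | mem x hx => exact Submodule.subset_span (R.mul_mem ha hx)
  | zero => rw [mul_zero]; exact Submodule.zero_mem _
  | add x y _ _ hx hy => rw [mul_add]; exact Submodule.add_mem _ hx hy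
  | smul q x _ hx => rw [mul_smul_comm]; exact Submodule.smul_mem _ _ hx

omit [FiniteDimensional Q S] in
lemma aeval_mem_span (p : Polynomial Q) {b : S} (hb : b ∈ R) :
    Polynomial.aeval b p ∈ Submodule.span Q (R : Set S) := by
  rw [Polynomial.aeval_eq_sum_range]
  exact Submodule.sum_mem _ fun i _ =>
    Submodule.smul_mem _ _ (Submodule.subset_span (R.pow_mem hb i))

lemma inv_mem_span {b bi : S} (hb : b ∈ R) (h1 : b * bi = 1) (h2 : bi * b = 1) :
    bi ∈ Submodule.span Q (R : Set S) := by
  have hint : IsIntegral Q b := Algebra.IsIntegral.isIntegral b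
  set p := minpoly Q b with hp
  have hpne : p ≠ 0 := minpoly.ne_zero hint
  have haev : Polynomial.aeval b p = 0 := minpoly.aeval Q b
  have hc0 : p.coeff 0 ≠ 0 := by
    intro hc
    have hsplit : p.divX * Polynomial.X + Polynomial.C (p.coeff 0) = p :=
      Polynomial.divX_mul_X_add p
    rw [hc, map_zero, add_zero] at hsplit
    have : Polynomial.aeval b p.divX * b = 0 := by
      have h3 : Polynomial.aeval b (p.divX * Polynomial.X) = 0 := by rw [hsplit]; exact haev
      simpa using h3
    have hdiv0 : Polynomial.aeval b p.divX = 0 := by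
      have := congrArg (· * bi) this
      simpa [mul_assoc, h1] using this
    have hdnz : p.divX ≠ 0 := by
      intro h0
      rw [h0, zero_mul] at hsplit
      exact hpne hsplit.symm
    have hlt : p.divX.degree < p.degree := Polynomial.degree_divX_lt hpne
    exact absurd (minpoly.degree_le_of_ne_zero Q b hdnz hdiv0) (not_le_of_gt hlt)
  -- aeval (divX p) * b = - algebraMap (coeff 0)
  have hsplit : p.divX * Polynomial.X + Polynomial.C (p.coeff 0) = p :=
    Polynomial.divX_mul_X_add p
  have hv : Polynomial.aeval b p.divX * b + algebraMap Q S (p.coeff 0) = 0 := by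
    have h4 : Polynomial.aeval b (p.divX * Polynomial.X + Polynomial.C (p.coeff 0)) = 0 := by
      rw [hsplit]; exact haev
    simpa using h4
  have hbi : bi = (-(p.coeff 0)⁻¹) • Polynomial.aeval b p.divX := by
    have hvb : Polynomial.aeval b p.divX = - (algebraMap Q S (p.coeff 0)) * bi := by
      have := congrArg (· * bi) hv
      simp only [add_mul, zero_mul, mul_assoc, h1, mul_one] at this
      have h' : Polynomial.aeval b p.divX = - (algebraMap Q S (p.coeff 0) * bi) := by
        linear_combination (norm := noncomm_ring) this
      rw [h', neg_mul]
    rw [hvb]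
    rw [neg_mul, smul_neg, neg_smul, neg_neg, Algebra.smul_def, ← mul_assoc, ← map_mul,
      inv_mul_cancel₀ hc0, map_one, one_mul]
  rw [hbi]
  exact Submodule.smul_mem _ _ (aeval_mem_span _ hb)

lemma span_order_top (hR : IsOrderIn R) : Submodule.span Q (R : Set S) = ⊤ := by
  rw [eq_top_iff]
  rintro x -
  obtain ⟨⟨a, b, bi, ha, hb, h1, h2, rfl⟩, -⟩ := hR x
  exact mul_left_span a ha (inv_mem_span hb h1 h2)

end SpanTop

section Density
set_option maxHeartbeats 1000000
set_option synthInstance.maxHeartbeats 400000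

variable (Q S : Type*) [Field Q] [Ring S] [Algebra Q S]

/-- The set of all maps `x ↦ s * x * t`. -/
def Gset : Set (Module.End Q S) := {f | ∃ s t : S, f = LinearMap.mulLeftRight Q (s, t)}

variable {Q S}

lemma mulLeftRight_mul (a b c d : S) :
    LinearMap.mulLeftRight Q (a, b) * LinearMap.mulLeftRight Q (c, d)
      = LinearMap.mulLeftRight Q (a * c, d * b) := by
  ext v
  simp only [Module.End.mul_apply, LinearMap.mulLeftRight_apply, mul_assoc]

lemma one_mem_Gset : (1 : Module.End Q S) ∈ Gset Q S :=
  ⟨1, 1, by ext v; show v = 1 * v * 1; rw [one_mul, mul_one]⟩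

lemma Gset_mul_mem {f g : Module.End Q S} (hf : f ∈ Gset Q S) (hg : g ∈ Gset Q S) :
    f * g ∈ Gset Q S := by
  obtain ⟨a, b, rfl⟩ := hf
  obtain ⟨c, d, rfl⟩ := hg
  exact ⟨a * c, d * b, mulLeftRight_mul a b c d⟩

variable (Q S) in
/-- The span of two-sided multiplications, as a submodule of `Module.End Q S`. -/
noncomputable def Bmod : Submodule Q (Module.End Q S) := Submodule.span Q (Gset Q S)

lemma Bmod_mul_mem {f g : Module.End Q S} (hf : f ∈ Bmod Q S) (hg : g ∈ Bmod Q S) :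
    f * g ∈ Bmod Q S := by
  induction hf using Submodule.span_induction with
  | mem x hx =>
    induction hg using Submodule.span_induction with
    | mem y hy => exact Submodule.subset_span (Gset_mul_mem hx hy)
    | zero => rw [mul_zero]; exact Submodule.zero_mem _
    | add y z _ _ hy hz => rw [mul_add]; exact Submodule.add_mem _ hy hz
    | smul q y _ hy => rw [mul_smul_comm]; exact Submodule.smul_mem _ _ hy
  | zero => rw [zero_mul]; exact Submodule.zero_mem _
  | add x y _ _ hx hy => rw [add_mul]; exact Submodule.add_mem _ hx hy
  | smul q x _ hx => rw [smul_mul_assoc]; exact Submodule.smul_mem _ _ hx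

variable (Q S) in
/-- The span of two-sided multiplications, as a subalgebra of `Module.End Q S`. -/
noncomputable def Bsub : Subalgebra Q (Module.End Q S) :=
  (Bmod Q S).toSubalgebra (Submodule.subset_span one_mem_Gset)
    (fun _ _ hf hg => Bmod_mul_mem hf hg)

lemma mem_Bsub {f : Module.End Q S} : f ∈ Bsub Q S ↔ f ∈ Bmod Q S := Iff.rfl

lemma mulLeftRight_mem_Bsub (s t : S) : LinearMap.mulLeftRight Q (s, t) ∈ Bsub Q S :=
  Submodule.subset_span ⟨s, t, rfl⟩

noncomputable instance Bsub_ring : Ring ↥(Bsub Q S) := Subalgebra.toRing _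

variable [FiniteDimensional Q S] [IsSimpleRing S]

lemma Bsub_smul_def (b : ↥(Bsub Q S)) (x : S) : b • x = (b : Module.End Q S) x := rfl

lemma simple_mod (N : Submodule ↥(Bsub Q S) S) : N = ⊥ ∨ N = ⊤ := by
  let I : TwoSidedIdeal S := TwoSidedIdeal.mk' (N : Set S) N.zero_mem
    (fun hx hy => N.add_mem hx hy) (fun {x} hx => show -x ∈ N from @Submodule.neg_mem _ _ _ _ _ N x hx)
    (fun {x y} hy => by
      have h := N.smul_mem ⟨LinearMap.mulLeftRight Q (x, 1), mulLeftRight_mem_Bsub x 1⟩ hy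
      simpa only [Bsub_smul_def, LinearMap.mulLeftRight_apply, mul_one, SetLike.mem_coe] using h)
    (fun {x y} hx => by
      have h := N.smul_mem ⟨LinearMap.mulLeftRight Q (1, y), mulLeftRight_mem_Bsub 1 y⟩ hx
      simpa only [Bsub_smul_def, LinearMap.mulLeftRight_apply, one_mul, SetLike.mem_coe] using h)
  have hmem : ∀ x : S, x ∈ I ↔ x ∈ N := fun x => TwoSidedIdeal.mem_mk' _ _ _ _ _ _ x
  rcases IsSimpleOrder.eq_bot_or_eq_top I with h | h
  · left
    rw [Submodule.eq_bot_iff]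
    intro x hx
    have hxI : x ∈ I := (hmem x).mpr hx
    rw [h] at hxI
    exact (TwoSidedIdeal.mem_bot S).mp hxI
  · right
    rw [eq_top_iff]
    intro x _
    exact (hmem x).mp (h ▸ TwoSidedIdeal.mem_top S)

lemma simple_mod' : IsSimpleModule ↥(Bsub Q S) S := by
  haveI : Nontrivial (Submodule ↥(Bsub Q S) S) := ⟨⊥, ⊤, by
    intro h
    exact one_ne_zero ((Submodule.eq_bot_iff _).mp h.symm 1 Submodule.mem_top)⟩
  exact IsSimpleModule.mk (toIsSimpleOrder := ⟨simple_mod⟩)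

theorem Bmod_eq_top (hcen : Subring.center S = (algebraMap Q S).range) :
    Bmod Q S = ⊤ := by
  classical
  haveI hsimple : IsSimpleModule ↥(Bsub Q S) S := simple_mod'
  haveI hss : IsSemisimpleModule ↥(Bsub Q S) S := by
    apply IsSemisimpleModule.of_sSup_simples_eq_top
    apply top_unique
    refine le_sSup ?_
    show IsSimpleModule ↥(Bsub Q S) (⊤ : Submodule ↥(Bsub Q S) S)
    exact IsSimpleModule.congr Submodule.topEquiv
  set n := Module.finrank Q S with hn
  let bas : Module.Basis (Fin n) Q S := Module.finBasis Q S
  haveI hssPi : IsSemisimpleModule ↥(Bsub Q S) (Fin n → S) := by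
    apply isSemisimpleModule_of_isSemisimpleModule_submodule'
      (p := fun i => LinearMap.range (LinearMap.single ↥(Bsub Q S) (fun _ => S) i))
    · intro i
      exact IsSemisimpleModule.range (LinearMap.single ↥(Bsub Q S) (fun _ => S) i)
    · exact LinearMap.iSup_range_single _ _
  let w : Fin n → S := fun i => bas i
  let W : Submodule ↥(Bsub Q S) (Fin n → S) := Submodule.span ↥(Bsub Q S) {w}
  obtain ⟨Wc, hWc⟩ := exists_isCompl W
  let prj : (Fin n → S) →ₗ[↥(Bsub Q S)] (Fin n → S) :=
    W.subtype.comp (W.linearProjOfIsCompl Wc hWc)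
  have hprjmem : ∀ v, prj v ∈ W := fun v => (W.linearProjOfIsCompl Wc hWc v).2
  have hprjW : ∀ v (hv : v ∈ W), prj v = v := by
    intro v hv
    show (W.subtype (W.linearProjOfIsCompl Wc hWc v) : Fin n → S) = v
    have : W.linearProjOfIsCompl Wc hWc v = ⟨v, hv⟩ := by
      have := Submodule.linearProjOfIsCompl_apply_left hWc ⟨v, hv⟩
      exact this
    rw [this]
    rfl
  have hcomm : ∀ (j k : Fin n) (s t x : S),
      prj (Pi.single k (s * x * t)) j = s * prj (Pi.single k x) j * t := by
    intro j k s t x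
    have h1 : Pi.single (M := fun _ : Fin n => S) k (s * x * t)
        = (⟨LinearMap.mulLeftRight Q (s, t), mulLeftRight_mem_Bsub s t⟩ : ↥(Bsub Q S))
            • Pi.single (M := fun _ : Fin n => S) k x := by
      funext i
      by_cases h : i = k
      · subst h
        simp [Pi.single_eq_same, Pi.smul_apply, Bsub_smul_def, LinearMap.mulLeftRight_apply]
      · simp [Pi.single_eq_of_ne h, Pi.smul_apply, Bsub_smul_def, LinearMap.mulLeftRight_apply]
    rw [h1, map_smul]
    simp [Pi.smul_apply, Bsub_smul_def, LinearMap.mulLeftRight_apply]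
  have hscalar : ∀ j k : Fin n, ∃ lam : Q, ∀ x : S, prj (Pi.single k x) j = lam • x := by
    intro j k
    set f : S → S := fun x => prj (Pi.single k x) j with hf
    have hfc : ∀ s x t, f (s * x * t) = s * f x * t := fun s x t => hcomm j k s t x
    have h1 : ∀ x, f x = x * f 1 := fun x => by
      have := hfc x 1 1; simpa using this
    have h2 : ∀ x, f x = f 1 * x := fun x => by
      have := hfc 1 1 x; simpa using this
    have hcen' : f 1 ∈ Subring.center S :=
      Subring.mem_center_iff.mpr (fun g => by rw [← h1 g, h2 g])
    rw [hcen] at hcen'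
    obtain ⟨lam, hlam⟩ := hcen'
    exact ⟨lam, fun x => by show f x = lam • x; rw [h2 x, ← hlam, ← Algebra.smul_def]⟩
  choose lam hlam using hscalar
  have hsingle : ∀ v : Fin n → S, v = ∑ k, Pi.single k (v k) := fun v => by
    funext i
    rw [Finset.sum_apply]
    simp [Pi.single_apply]
  have hw : w ∈ W := Submodule.mem_span_singleton_self w
  have hprjw : prj w = w := hprjW w hw
  have hdelta : ∀ j k, lam j k = if j = k then 1 else 0 := by
    intro j k
    have h1 : prj w j = w j := congrFun hprjw j
    have h2 : prj w j = ∑ k', lam j k' • bas k' := by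
      conv_lhs => rw [hsingle w]
      rw [map_sum, Finset.sum_apply]
      exact Finset.sum_congr rfl fun k' _ => hlam j k' (bas k')
    have h3 := congrArg (fun x => bas.repr x k) (h2.symm.trans h1)
    simpa [map_sum, map_smul, Module.Basis.repr_self, Finsupp.smul_apply, Finsupp.single_apply,
      smul_eq_mul, mul_ite, mul_one, mul_zero, Finset.sum_ite_eq, w] using h3
  have hid : ∀ v, prj v = v := by
    intro v
    funext j
    conv_lhs => rw [hsingle v]
    rw [map_sum, Finset.sum_apply]
    have heach : ∀ k, prj (Pi.single k (v k)) j = (if j = k then (1 : Q) else 0) • v k :=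
      fun k => by rw [hlam j k, hdelta]
    rw [Finset.sum_congr rfl (fun k _ => heach k)]
    simp [ite_smul, Finset.sum_ite_eq]
  have hWtop : W = ⊤ := by
    rw [eq_top_iff]
    intro v _
    have := hprjmem v
    rwa [hid v] at this
  rw [eq_top_iff]
  rintro φ -
  have hmem : (fun i => φ (bas i)) ∈ W := hWtop ▸ Submodule.mem_top
  rw [Submodule.mem_span_singleton] at hmem
  obtain ⟨⟨β, hβ⟩, hb⟩ := hmem
  have hagree : ∀ i, β (bas i) = φ (bas i) := fun i => by
    have := congrFun hb i
    simpa [Pi.smul_apply, Bsub_smul_def, w] using this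
  have : β = φ := bas.ext hagree
  rw [← this]
  exact hβ

end Density

section Engine

variable {Q S : Type*} [Field Q] [Ring S] [Algebra Q S]
variable {R : Subring S}

lemma right_denom_fin (hR : IsOrderIn R) {ι : Type*} [Fintype ι] (x : ι → S) :
    ∃ b bi : S, b ∈ R ∧ b * bi = 1 ∧ bi * b = 1 ∧ ∀ i, x i * b ∈ R := by
  obtain ⟨b, bi, hb, h1, h2, hmem⟩ :=
    right_denom_list hR ((Finset.univ : Finset ι).toList.map x)
  exact ⟨b, bi, hb, h1, h2, fun i => hmem (x i)
    (List.mem_map_of_mem (f := x) (Finset.mem_toList.mpr (Finset.mem_univ i)))⟩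

lemma left_denom_fin (hR : IsOrderIn R) {ι : Type*} [Fintype ι] (x : ι → S) :
    ∃ c ci : S, c ∈ R ∧ c * ci = 1 ∧ ci * c = 1 ∧ ∀ i, c * x i ∈ R := by
  obtain ⟨c, ci, hc, h1, h2, hmem⟩ :=
    left_denom_list hR ((Finset.univ : Finset ι).toList.map x)
  exact ⟨c, ci, hc, h1, h2, fun i => hmem (x i)
    (List.mem_map_of_mem (f := x) (Finset.mem_toList.mpr (Finset.mem_univ i)))⟩

variable (Q) in
/-- generators with both slots in `R` -/
def ERset (R : Subring S) : Set (Module.End Q S) :=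
  {f | ∃ r ∈ R, ∃ r' ∈ R, f = LinearMap.mulLeftRight Q (r, r')}

lemma ER_mul_mem {f g : Module.End Q S} (hf : f ∈ Submodule.span ℤ (ERset Q R))
    (hg : g ∈ Submodule.span ℤ (ERset Q R)) : f * g ∈ Submodule.span ℤ (ERset Q R) := by
  induction hf using Submodule.span_induction with
  | mem x hx =>
    induction hg using Submodule.span_induction with
    | mem y hy =>
      obtain ⟨r1, hr1, r1', hr1', rfl⟩ := hx
      obtain ⟨r2, hr2, r2', hr2', rfl⟩ := hy
      rw [mulLeftRight_mul]
      exact Submodule.subset_span ⟨r1 * r2, R.mul_mem hr1 hr2, r2' * r1',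
        R.mul_mem hr2' hr1', rfl⟩
    | zero => rw [mul_zero]; exact Submodule.zero_mem _
    | add y z _ _ hy hz => rw [mul_add]; exact Submodule.add_mem _ hy hz
    | smul nn y _ hy => rw [mul_smul_comm]; exact Submodule.smul_mem _ _ hy
  | zero => rw [zero_mul]; exact Submodule.zero_mem _
  | add x y _ _ hx hy => rw [add_mul]; exact Submodule.add_mem _ hx hy
  | smul nn x _ hx => rw [smul_mul_assoc]; exact Submodule.smul_mem _ _ hx

lemma ER_eval_one {f : Module.End Q S} (hf : f ∈ Submodule.span ℤ (ERset Q R)) :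
    f 1 ∈ R := by
  induction hf using Submodule.span_induction with
  | mem x hx =>
    obtain ⟨r, hr, r', hr', rfl⟩ := hx
    rw [LinearMap.mulLeftRight_apply]
    rw [mul_one]
    exact R.mul_mem hr hr'
  | zero => exact R.zero_mem
  | add x y _ _ hx hy => rw [LinearMap.add_apply]; exact R.add_mem hx hy
  | smul nn x _ hx =>
    rw [LinearMap.smul_apply]
    exact zsmul_mem (K := R.toAddSubgroup) hx nn

lemma smul_mulLeftRight (q : Q) (s t : S) :
    q • LinearMap.mulLeftRight Q (s, t) = LinearMap.mulLeftRight Q (q • s, t) := by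
  ext v
  simp only [LinearMap.smul_apply, LinearMap.mulLeftRight_apply, smul_mul_assoc]

lemma mulLeftRight_one : LinearMap.mulLeftRight Q ((1 : S), (1 : S)) = 1 := by
  ext v
  show 1 * v * 1 = v
  rw [one_mul, mul_one]

variable [FiniteDimensional Q S] [IsSimpleRing S]

/-- The central engine: every scalar `q` admits a nonzero "denominator" `z` such that
both `z` and `z * q` land (as elements of `S`) in the order `R`. -/
theorem engine (hcen : Subring.center S = (algebraMap Q S).range) (hR : IsOrderIn R)
    (q : Q) :
    ∃ z : Q, z ≠ 0 ∧ algebraMap Q S z ∈ R ∧ algebraMap Q S (z * q) ∈ R := by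
  classical
  set n := Module.finrank Q S with hn
  let bas : Module.Basis (Fin n) Q S := Module.finBasis Q S
  let Eij : Fin n → Fin n → Module.End Q S :=
    fun i j => LinearMap.smulRight (bas.coord j) (bas i)
  have hrep : ∀ i j : Fin n, ∃ (m : ℕ) (σ t : Fin m → S),
      Eij i j = ∑ k, LinearMap.mulLeftRight Q (σ k, t k) := by
    intro i j
    have h : Eij i j ∈ Bmod Q S := by rw [Bmod_eq_top hcen]; trivial
    rw [Bmod] at h
    rw [Submodule.mem_span_set'] at h
    obtain ⟨m, f, g, hfg⟩ := h
    choose s t hst using fun k => (g k).2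
    refine ⟨m, fun k => f k • s k, t, ?_⟩
    rw [← hfg]
    refine Finset.sum_congr rfl fun k _ => ?_
    rw [hst k, smul_mulLeftRight]
  choose m σ t hrep using hrep
  let κ := Σ p : Fin n × Fin n, Fin (m p.1 p.2)
  let σf : κ → S := fun u => σ u.1.1 u.1.2 u.2
  let tf : κ → S := fun u => t u.1.1 u.1.2 u.2
  obtain ⟨b, bi, hbR, hb1, hb2, hbd⟩ := right_denom_fin hR
    (fun u : κ × Bool => if u.2 then q • σf u.1 else σf u.1)
  obtain ⟨c, ci, hcR, hc1, hc2, hcd⟩ := left_denom_fin hR tf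
  obtain ⟨b', b'i, hb'R, hb'1, hb'2, hb'd⟩ := left_denom_fin hR σf
  obtain ⟨c', c'i, hc'R, hc'1, hc'2, hc'd⟩ := right_denom_fin hR tf
  have hbdσ : ∀ u : κ, σf u * b ∈ R := fun u => by simpa using hbd (u, false)
  have hbdqσ : ∀ u : κ, (q • σf u) * b ∈ R := fun u => by simpa using hbd (u, true)
  -- the cleared products
  have hu : ∀ i j : Fin n,
      Eij i j * LinearMap.mulLeftRight Q (b, c) ∈ Submodule.span ℤ (ERset Q R) := by
    intro i j
    rw [hrep i j, Finset.sum_mul]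
    refine Submodule.sum_mem _ fun k _ => ?_
    rw [mulLeftRight_mul]
    exact Submodule.subset_span ⟨σ i j k * b, hbdσ ⟨(i, j), k⟩, c * t i j k,
      hcd ⟨(i, j), k⟩, rfl⟩
  have huq : ∀ i j : Fin n,
      (q • Eij i j) * LinearMap.mulLeftRight Q (b, c) ∈ Submodule.span ℤ (ERset Q R) := by
    intro i j
    rw [hrep i j, Finset.smul_sum, Finset.sum_mul]
    refine Submodule.sum_mem _ fun k _ => ?_
    rw [smul_mulLeftRight, mulLeftRight_mul]
    exact Submodule.subset_span ⟨(q • σ i j k) * b, hbdqσ ⟨(i, j), k⟩, c * t i j k,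
      hcd ⟨(i, j), k⟩, rfl⟩
  have hv : ∀ k l : Fin n,
      LinearMap.mulLeftRight Q (b', c') * Eij k l ∈ Submodule.span ℤ (ERset Q R) := by
    intro k l
    rw [hrep k l, Finset.mul_sum]
    refine Submodule.sum_mem _ fun u _ => ?_
    rw [mulLeftRight_mul]
    exact Submodule.subset_span ⟨b' * σ k l u, hb'd ⟨(k, l), u⟩, t k l u * c',
      hc'd ⟨(k, l), u⟩, rfl⟩
  -- ψ and its invertibility
  set ψ : Module.End Q S := LinearMap.mulLeftRight Q (b * b', c' * c) with hψdef
  have hψsplit : LinearMap.mulLeftRight Q (b, c) * LinearMap.mulLeftRight Q (b', c') = ψ := by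
    rw [mulLeftRight_mul]
  have hψunit : ψ * LinearMap.mulLeftRight Q (b'i * bi, ci * c'i) = 1 := by
    rw [mulLeftRight_mul]
    have e1 : b * b' * (b'i * bi) = 1 := by
      calc b * b' * (b'i * bi) = b * (b' * b'i) * bi := by simp only [mul_assoc]
        _ = b * bi := by rw [hb'1, mul_one]
        _ = 1 := hb1
    have e2 : ci * c'i * (c' * c) = 1 := by
      calc ci * c'i * (c' * c) = ci * (c'i * c') * c := by simp only [mul_assoc]
        _ = ci * c := by rw [hc'2, mul_one]
        _ = 1 := hc2
    rw [e1, e2, mulLeftRight_one]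
  -- coordinates
  have hcoord : ∀ (χ : Module.End Q S) (i j k l : Fin n),
      Eij i j * χ * Eij k l = (bas.repr (χ (bas k)) j) • Eij i l := by
    intro χ i j k l
    ext v
    simp only [Module.End.mul_apply, LinearMap.smul_apply, Eij, LinearMap.smulRight_apply,
      Module.Basis.coord_apply, map_smul, smul_smul]
    rw [mul_comm]
  have hexists : ∃ j k : Fin n, bas.repr (ψ (bas k)) j ≠ 0 := by
    by_contra hcon
    push_neg at hcon
    have hzero : ψ = 0 := by
      refine bas.ext fun k => ?_
      have hrep0 : bas.repr (ψ (bas k)) = 0 := Finsupp.ext fun j => hcon j k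
      have : ψ (bas k) = 0 := by
        have := congrArg (bas.repr.symm) hrep0
        simpa using this
      simpa using this
    rw [hzero, zero_mul] at hψunit
    have : (0 : Module.End Q S) (1 : S) = (1 : Module.End Q S) (1 : S) := by rw [hψunit]
    simp only [LinearMap.zero_apply, Module.End.one_apply] at this
    exact one_ne_zero this.symm
  obtain ⟨j, k, hjk⟩ := hexists
  set lam : Q := bas.repr (ψ (bas k)) j with hlam
  have hEl : ∀ i l : Fin n, lam • Eij i l ∈ Submodule.span ℤ (ERset Q R) := by
    intro i l
    have hmem := ER_mul_mem (hu i j) (hv k l)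
    have heq : (Eij i j * LinearMap.mulLeftRight Q (b, c))
        * (LinearMap.mulLeftRight Q (b', c') * Eij k l) = lam • Eij i l := by
      rw [mul_assoc, ← mul_assoc (LinearMap.mulLeftRight Q (b, c)), hψsplit,
        ← mul_assoc, hcoord ψ i j k l]
    rwa [heq] at hmem
  have hElq : ∀ i l : Fin n, (q * lam) • Eij i l ∈ Submodule.span ℤ (ERset Q R) := by
    intro i l
    have hmem := ER_mul_mem (huq i j) (hv k l)
    have heq : ((q • Eij i j) * LinearMap.mulLeftRight Q (b, c))
        * (LinearMap.mulLeftRight Q (b', c') * Eij k l) = (q * lam) • Eij i l := by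
      rw [smul_mul_assoc, smul_mul_assoc, mul_assoc,
        ← mul_assoc (LinearMap.mulLeftRight Q (b, c)), hψsplit, ← mul_assoc,
        hcoord ψ i j k l, smul_smul]
    rwa [heq] at hmem
  have hsum : ∀ lamq : Q, (∑ i, lamq • Eij i i) = lamq • (1 : Module.End Q S) := by
    intro lamq
    rw [← Finset.smul_sum]
    congr 1
    refine bas.ext fun k' => ?_
    rw [LinearMap.sum_apply, Module.End.one_apply]
    have : ∀ i, (Eij i i) (bas k') = (bas.repr (bas k') i) • bas i := fun i => by
      simp [Eij, LinearMap.smulRight_apply, Module.Basis.coord_apply]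
    rw [Finset.sum_congr rfl fun i _ => this i]
    exact bas.sum_repr (bas k')
  have h1mem : lam • (1 : Module.End Q S) ∈ Submodule.span ℤ (ERset Q R) := by
    rw [← hsum lam]
    exact Submodule.sum_mem _ fun i _ => hEl i i
  have h2mem : (q * lam) • (1 : Module.End Q S) ∈ Submodule.span ℤ (ERset Q R) := by
    rw [← hsum (q * lam)]
    exact Submodule.sum_mem _ fun i _ => hElq i i
  refine ⟨lam, hjk, ?_, ?_⟩
  · have := ER_eval_one h1mem
    rwa [LinearMap.smul_apply, Module.End.one_apply, ← Algebra.algebraMap_eq_smul_one] at this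
  · have := ER_eval_one h2mem
    rw [LinearMap.smul_apply, Module.End.one_apply, ← Algebra.algebraMap_eq_smul_one] at this
    rwa [mul_comm lam q]

end Engine

section Final

variable {Q S : Type*} [Field Q] [Ring S] [Algebra Q S] [FiniteDimensional Q S] [IsSimpleRing S]
variable {R : Subring S}

theorem clear_elem (hcen : Subring.center S = (algebraMap Q S).range) (hR : IsOrderIn R)
    (s : S) :
    ∃ z : Q, z ≠ 0 ∧ algebraMap Q S z ∈ R ∧ algebraMap Q S z * s ∈ R := by
  have hs : s ∈ Submodule.span Q (R : Set S) := by rw [span_order_top hR]; trivial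
  induction hs using Submodule.span_induction with
  | mem x hx =>
    exact ⟨1, one_ne_zero, by simpa using R.one_mem, by simpa using hx⟩
  | zero =>
    exact ⟨1, one_ne_zero, by simpa using R.one_mem, by simpa using R.zero_mem⟩
  | add x y _ _ hx hy =>
    obtain ⟨z1, hz1, hz1R, hz1x⟩ := hx
    obtain ⟨z2, hz2, hz2R, hz2y⟩ := hy
    refine ⟨z1 * z2, mul_ne_zero hz1 hz2,
      by rw [map_mul]; exact R.mul_mem hz1R hz2R, ?_⟩
    rw [mul_add]
    refine R.add_mem ?_ ?_
    · have h : algebraMap Q S (z1 * z2) * x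
          = algebraMap Q S z2 * (algebraMap Q S z1 * x) := by
        rw [map_mul, ← map_mul, mul_comm z1 z2, map_mul, mul_assoc]
      rw [h]; exact R.mul_mem hz2R hz1x
    · have h : algebraMap Q S (z1 * z2) * y
          = algebraMap Q S z1 * (algebraMap Q S z2 * y) := by
        rw [map_mul, mul_assoc]
      rw [h]; exact R.mul_mem hz1R hz2y
  | smul q x hx ih =>
    obtain ⟨z1, hz1, hz1R, hz1x⟩ := ih
    obtain ⟨z2, hz2, hz2R, hz2q⟩ := engine hcen hR q
    refine ⟨z1 * z2, mul_ne_zero hz1 hz2,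
      by rw [map_mul]; exact R.mul_mem hz1R hz2R, ?_⟩
    have h : algebraMap Q S (z1 * z2) * (q • x)
        = algebraMap Q S (z2 * q) * (algebraMap Q S z1 * x) := by
      rw [Algebra.smul_def, map_mul, map_mul]
      have h1 : algebraMap Q S z1 * algebraMap Q S z2 = algebraMap Q S z2 * algebraMap Q S z1 := by
        rw [← map_mul, ← map_mul, mul_comm]
      have h2 : algebraMap Q S z1 * algebraMap Q S q = algebraMap Q S q * algebraMap Q S z1 := by
        rw [← map_mul, ← map_mul, mul_comm]
      calc algebraMap Q S z1 * algebraMap Q S z2 * (algebraMap Q S q * x)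
          = algebraMap Q S z2 * algebraMap Q S z1 * (algebraMap Q S q * x) := by rw [h1]
        _ = algebraMap Q S z2 * (algebraMap Q S z1 * algebraMap Q S q * x) := by
            simp only [mul_assoc]
        _ = algebraMap Q S z2 * (algebraMap Q S q * algebraMap Q S z1 * x) := by rw [h2]
        _ = algebraMap Q S z2 * algebraMap Q S q * (algebraMap Q S z1 * x) := by
            simp only [mul_assoc]
    rw [h]; exact R.mul_mem hz2q hz1x

end Final

end Statement3Aux

open Statement3Aux in
/-- An order `R` in a central simple algebra `S` is a maximal
order iff for every nonzero `z ∈ Z(R)` and every ring `R'` with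
`R ⊆ R' ⊆ (1/z)R = {x : x z ∈ R}`, one has `R' = R`. -/
theorem statement3 {Q S : Type*} [Field Q] [Ring S] [Algebra Q S]
    [FiniteDimensional Q S] [IsSimpleRing S]
    (hcen : Subring.center S = (algebraMap Q S).range)
    (R : Subring S) (hR : IsOrderIn R) :
    IsMaximalOrderIn R ↔
      ∀ z : S, z ∈ R → (∀ r ∈ R, z * r = r * z) → z ≠ 0 →
        ∀ R' : Subring S, R ≤ R' → (∀ x ∈ R', x * z ∈ R) → R' = R := by
  constructor
  · rintro ⟨-, hmax⟩ z hzR hzcomm hz0 R' hle hR'z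
    -- z is central in S
    have hzc : z ∈ Subring.center S := by
      rw [Subring.mem_center_iff]
      intro g
      obtain ⟨-, ⟨c, d, ci, hc, hd, h1, h2, rfl⟩⟩ := hR g
      have hzci : z * ci = ci * z := by
        have h := hzcomm c hc
        calc z * ci = ci * c * (z * ci) := by rw [h2, one_mul]
          _ = ci * (c * z * ci) := by simp only [mul_assoc]
          _ = ci * (z * c * ci) := by rw [← h]
          _ = ci * z * (c * ci) := by simp only [mul_assoc]
          _ = ci * z := by rw [h1, mul_one]
      have hzd := hzcomm d hd
      calc ci * d * z = ci * (d * z) := by rw [mul_assoc]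
        _ = ci * (z * d) := by rw [← hzd]
        _ = (ci * z) * d := by rw [mul_assoc]
        _ = z * (ci * d) := by rw [← hzci, mul_assoc]
    rw [hcen] at hzc
    obtain ⟨μ, hμ⟩ := hzc
    have hμ0 : μ ≠ 0 := by
      rintro rfl
      rw [map_zero] at hμ
      exact hz0 hμ.symm
    let zu : Sˣ := ⟨z, algebraMap Q S μ⁻¹,
      by rw [← hμ, ← map_mul, mul_inv_cancel₀ hμ0, map_one],
      by rw [← hμ, ← map_mul, inv_mul_cancel₀ hμ0, map_one]⟩
    apply hmax R'
    · intro x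
      obtain ⟨⟨a1, b1, bi1, h1, h2, h3, h4, h5⟩, ⟨c1, d1, ci1, k1, k2, k3, k4, k5⟩⟩ := hR x
      exact ⟨⟨a1, b1, bi1, hle h1, hle h2, h3, h4, h5⟩,
        ⟨c1, d1, ci1, hle k1, hle k2, k3, k4, k5⟩⟩
    · constructor
      · exact ⟨1, 1, fun r hr => by simpa using hle hr⟩
      · refine ⟨1, zu, fun r hr => ?_⟩
        have : (↑(1 : Sˣ) : S) * r * (↑zu : S) = r * z := by
          rw [Units.val_one, one_mul]
        rw [this]
        exact hR'z r hr
    · exact hle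
  · intro H
    refine ⟨hR, ?_⟩
    intro R' hR' hequiv hle
    obtain ⟨-, a, b, hab⟩ := hequiv
    obtain ⟨z1, hz10, hz1R, hz1a⟩ := clear_elem hcen hR ((↑a⁻¹ : S))
    obtain ⟨z2, hz20, hz2R, hz2b⟩ := clear_elem hcen hR ((↑b⁻¹ : S))
    set z : S := algebraMap Q S z1 * algebraMap Q S z2 with hzdef
    have hz : z = algebraMap Q S (z1 * z2) := by rw [map_mul]
    apply H z (R.mul_mem hz1R hz2R)
    · intro r _
      rw [hz]
      exact Algebra.commutes (z1 * z2) r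
    · intro h0
      have h1 : (1 : S) = 0 := by
        have : algebraMap Q S ((z1 * z2) * (z1 * z2)⁻¹) = 0 := by
          rw [map_mul, ← hz, h0, zero_mul]
        rwa [mul_inv_cancel₀ (mul_ne_zero hz10 hz20), map_one] at this
      exact one_ne_zero h1
    · exact hle
    · intro x hx
      have key : x * z = (algebraMap Q S z1 * (↑a⁻¹ : S)) * ((↑a : S) * x * (↑b : S))
          * (algebraMap Q S z2 * (↑b⁻¹ : S)) := by
        have ha : (↑a⁻¹ : S) * (↑a : S) = 1 := Units.inv_mul a
        have hb : (↑b : S) * (↑b⁻¹ : S) = 1 := Units.mul_inv b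
        have hc1 : ∀ y : S, algebraMap Q S z1 * y = y * algebraMap Q S z1 :=
          fun y => Algebra.commutes z1 y
        have hc2 : ∀ y : S, algebraMap Q S z2 * y = y * algebraMap Q S z2 :=
          fun y => Algebra.commutes z2 y
        calc x * z = x * (algebraMap Q S z1 * algebraMap Q S z2) := rfl
          _ = algebraMap Q S z1 * x * algebraMap Q S z2 := by
              rw [← mul_assoc, ← hc1 x]
          _ = algebraMap Q S z1 * (1 : S) * x * ((1 : S) * algebraMap Q S z2) := by
              rw [mul_one, one_mul]
          _ = algebraMap Q S z1 * ((↑a⁻¹ : S) * (↑a : S)) * x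
                * ((↑b : S) * (↑b⁻¹ : S) * algebraMap Q S z2) := by rw [ha, hb]
          _ = algebraMap Q S z1 * (↑a⁻¹ : S) * ((↑a : S) * x * (↑b : S))
                * ((↑b⁻¹ : S) * algebraMap Q S z2) := by simp only [mul_assoc]
          _ = (algebraMap Q S z1 * (↑a⁻¹ : S)) * ((↑a : S) * x * (↑b : S))
                * (algebraMap Q S z2 * (↑b⁻¹ : S)) := by rw [hc2 (↑b⁻¹ : S)]
      rw [key]
      exact R.mul_mem (R.mul_mem hz1a (hab x hx)) hz2b
end

section
/- A submonoid Φ of Z^N is integrally convex (i.e., f, g ∈ Φ implies every point of the group Φ−Φ lying in the segment [f,g] lies in Φ) if and only if it satisfies the weaker condition: for every f ∈ Φ−Φ, if kf ∈ Φ for some positive integer k, then f ∈ Φ. -/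
/-- The canonical embedding `ℤ^N ↪ ℝ^N`. -/
def toReal {N : ℕ} (f : Fin N → ℤ) : Fin N → ℝ := fun i => (f i : ℝ)

/-- A submonoid `Φ` of `ℤ^N` is integrally convex (i.e. for
`f, g ∈ Φ` every point of `Φ − Φ` lying on the real segment `[f, g]` lies in
`Φ`) if and only if it satisfies the weaker condition: for every `h ∈ Φ − Φ`,
if `k h ∈ Φ` for some positive integer `k`, then `h ∈ Φ`. -/
theorem statement15 {N : ℕ} (Φ : Set (Fin N → ℤ))
    (h0 : (0 : Fin N → ℤ) ∈ Φ)
    (hadd : ∀ f ∈ Φ, ∀ g ∈ Φ, f + g ∈ Φ) :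
    (∀ f ∈ Φ, ∀ g ∈ Φ, ∀ h : Fin N → ℤ,
        (∃ α ∈ Φ, ∃ β ∈ Φ, h = α - β) →
        toReal h ∈ segment ℝ (toReal f) (toReal g) → h ∈ Φ) ↔
    (∀ h : Fin N → ℤ, (∃ α ∈ Φ, ∃ β ∈ Φ, h = α - β) →
        ∀ k : ℕ, 0 < k → k • h ∈ Φ → h ∈ Φ) := by
  have hnsmul : ∀ n : ℕ, ∀ f ∈ Φ, n • f ∈ Φ := by
    intro n
    induction n with
    | zero => intro f _; simpa using h0
    | succ m ih =>
      intro f hf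
      rw [succ_nsmul]
      exact hadd _ (ih f hf) f hf
  constructor
  · -- integral convexity ⇒ divisibility condition
    intro hconv h hmem k hk hkh
    apply hconv 0 h0 (k • h) hkh h hmem
    refine ⟨1 - 1 / (k : ℝ), 1 / (k : ℝ), ?_, ?_, by ring, ?_⟩
    · have : (1 : ℝ) ≤ (k : ℝ) := by exact_mod_cast hk
      have hkpos : (0 : ℝ) < k := by positivity
      rw [sub_nonneg]
      exact div_le_one_of_le₀ this hkpos.le
    · positivity
    · have hkne : (k : ℝ) ≠ 0 := by positivity
      funext j
      simp only [toReal, Pi.add_apply, Pi.smul_apply, smul_eq_mul, Pi.zero_apply,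
        Int.cast_zero]
      field_simp
      rw [nsmul_eq_mul]; push_cast; ring
  · -- divisibility condition ⇒ integral convexity
    intro hcond f hf g hg h hmem hseg
    obtain ⟨a, b, ha, hb, hab, heq⟩ := hseg
    have heq' : ∀ j, a * (f j : ℝ) + b * (g j : ℝ) = (h j : ℝ) := by
      intro j
      have := congrFun heq j
      simpa [toReal, Pi.add_apply, Pi.smul_apply] using this
    by_cases hfg : f = g
    · -- degenerate segment
      have : h = f := by
        funext j
        have := heq' j
        rw [hfg] at this ⊢
        have h2 : ((h j : ℝ)) = (g j : ℝ) := by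
          rw [← this]; rw [← add_mul]; rw [hab]; ring
        exact_mod_cast h2
      rw [this]; exact hf
    · obtain ⟨i, hi⟩ : ∃ i, f i ≠ g i := by
        by_contra hc
        push_neg at hc
        exact hfg (funext hc)
      set d : ℤ := g i - f i with hd
      have hdne : d ≠ 0 := fun hz => hi (by omega)
      set n : ℤ := h i - f i with hn
      have hbd : b * (d : ℝ) = (n : ℝ) := by
        have := heq' i
        have ha1 : a = 1 - b := by linarith
        push_cast [hd, hn]
        rw [ha1] at this
        ring_nf
        ring_nf at this
        linarith
      have hb1 : b ≤ 1 := by linarith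
      -- find natural numbers q, p with 0 < q, p ≤ q, b * q = p
      obtain ⟨q, p, hqpos, hpq, hbq⟩ :
          ∃ (q p : ℕ), 0 < q ∧ p ≤ q ∧ b * (q : ℝ) = (p : ℝ) := by
        rcases lt_or_gt_of_ne hdne with hdlt | hdgt
        · have hdR : (d : ℝ) < 0 := by exact_mod_cast hdlt
          have h1 : (0 : ℝ) ≤ -(n : ℝ) := by nlinarith [hbd]
          have h2 : -(n : ℝ) ≤ -(d : ℝ) := by nlinarith [hbd]
          refine ⟨(-d).toNat, (-n).toNat, by omega, ?_, ?_⟩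
          · have h1' : (0 : ℤ) ≤ -n := by exact_mod_cast h1
            have h2' : -n ≤ -d := by exact_mod_cast h2
            omega
          · have h1' : (0 : ℤ) ≤ -n := by exact_mod_cast h1
            have : ((-d).toNat : ℝ) = -(d : ℝ) := by
              have : ((-d).toNat : ℤ) = -d := Int.toNat_of_nonneg (by omega)
              exact_mod_cast this
            rw [this]
            have : ((-n).toNat : ℝ) = -(n : ℝ) := by
              have : ((-n).toNat : ℤ) = -n := Int.toNat_of_nonneg h1'
              exact_mod_cast this
            rw [this]
            nlinarith
        · have hdR : (0 : ℝ) < (d : ℝ) := by exact_mod_cast hdgt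
          have h1 : (0 : ℝ) ≤ (n : ℝ) := by nlinarith [hbd]
          have h2 : (n : ℝ) ≤ (d : ℝ) := by nlinarith [hbd]
          refine ⟨d.toNat, n.toNat, by omega, ?_, ?_⟩
          · have h1' : (0 : ℤ) ≤ n := by exact_mod_cast h1
            have h2' : n ≤ d := by exact_mod_cast h2
            omega
          · have h1' : (0 : ℤ) ≤ n := by exact_mod_cast h1
            have hdt : (d.toNat : ℝ) = (d : ℝ) := by
              have : (d.toNat : ℤ) = d := Int.toNat_of_nonneg (by omega)
              exact_mod_cast this
            have hnt : (n.toNat : ℝ) = (n : ℝ) := by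
              have : (n.toNat : ℤ) = n := Int.toNat_of_nonneg h1'
              exact_mod_cast this
            rw [hdt, hnt, hbd]
      -- q • h = (q - p) • f + p • g
      have hkey : q • h = (q - p) • f + p • g := by
        funext j
        have hreal : (q : ℝ) * (h j : ℝ) = ((q : ℝ) - p) * (f j : ℝ) + p * (g j : ℝ) := by
          have := heq' j
          have ha1 : a = 1 - b := by linarith
          rw [ha1] at this
          linear_combination (-(q:ℝ)) * this - ((f j : ℝ) - (g j : ℝ)) * hbq
        have hint : (q : ℤ) * h j = ((q : ℤ) - p) * f j + p * g j := by
          exact_mod_cast hreal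
        simp only [Pi.add_apply, Pi.smul_apply]
        rw [nsmul_eq_mul, nsmul_eq_mul, nsmul_eq_mul, Nat.cast_sub hpq]
        exact hint
      have hqh : q • h ∈ Φ := by
        rw [hkey]
        exact hadd _ (hnsmul _ _ hf) _ (hnsmul _ _ hg)
      exact hcond h hmem q hqpos hqh
end

section
/- For two nonzero elements b_1, b_2 of a quantum torus T_ε(Λ) over an integral domain, the Newton polytope of the product satisfies Newt(b_1 b_2) = Newt(b_1) + Newt(b_2) (Minkowski sum). -/
open scoped Pointwise

/-- The Newton polytope of a nonzero element of the quantum torus: the convex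
hull in `ℝ^N` of the (finite) support of its expansion in the basis `{X^f}`. -/
noncomputable def newtonPolytope {A T : Type*} [CommRing A] [Ring T] [Algebra A T]
    {N : ℕ} (b : Module.Basis (Fin N → ℤ) A T) (x : T) : Set (Fin N → ℝ) :=
  convexHull ℝ (toReal '' ↑(b.repr x).support)

lemma toReal_add {N : ℕ} (f g : Fin N → ℤ) : toReal (f + g) = toReal f + toReal g := by
  funext i; simp [toReal]

lemma toReal_inj {N : ℕ} : Function.Injective (toReal (N := N)) := by
  intro f g h
  funext i
  have := congrFun h i
  simpa [toReal] using this

/-- Extreme points of a Minkowski sum decompose uniquely into extreme points. -/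
lemma extremePoints_add_decomp {E : Type*} [AddCommGroup E] [Module ℝ E]
    {P Q : Set E} {e : E} (he : e ∈ (P + Q).extremePoints ℝ) :
    ∃ p ∈ P.extremePoints ℝ, ∃ q ∈ Q.extremePoints ℝ, p + q = e ∧
      ∀ p' ∈ P, ∀ q' ∈ Q, p' + q' = e → p' = p ∧ q' = q := by
  obtain ⟨hePQ, hext⟩ := he
  obtain ⟨p, hp, q, hq, rfl⟩ := Set.mem_add.1 hePQ
  have uniq : ∀ p' ∈ P, ∀ q' ∈ Q, p' + q' = p + q → p' = p ∧ q' = q := by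
    intro p' hp' q' hq' h
    have key : p + q' = p + q := by
      by_cases hc : p + q' = p' + q
      · -- 2 • (p + q') = 2 • (p + q)
        have h2 : (2 : ℝ) • (p + q') = (2 : ℝ) • (p + q) := by
          have hsum : (p + q') + (p' + q) = (p + q) + (p + q) := by
            calc (p + q') + (p' + q) = (p' + q') + (p + q) := by abel
              _ = (p + q) + (p + q) := by rw [h]
          rw [← hc] at hsum
          rw [two_smul, two_smul]
          exact hsum
        exact smul_right_injective E (two_ne_zero) h2
      · have hmem : p + q ∈ openSegment ℝ (p + q') (p' + q) := by
          refine ⟨1/2, 1/2, by norm_num, by norm_num, by norm_num, ?_⟩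
          rw [smul_add, smul_add, ← add_assoc]
          have : (p + q') + (p' + q) = (p + q) + (p + q) := by
            calc (p + q') + (p' + q) = (p' + q') + (p + q) := by abel
              _ = (p + q) + (p + q) := by rw [h]
          calc ((1:ℝ)/2) • p + (1/2 : ℝ) • q' + (1/2 : ℝ) • p' + (1/2 : ℝ) • q
              = ((1:ℝ)/2) • ((p + q') + (p' + q)) := by
                simp only [smul_add]; abel
            _ = ((1:ℝ)/2) • ((p + q) + (p + q)) := by rw [this]
            _ = p + q := by
                rw [smul_add, ← add_smul]; norm_num
        exact (hext (Set.add_mem_add hp hq') (Set.add_mem_add hp' hq) hmem)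
    have hq' : q' = q := by
      have := add_left_cancel key; exact this
    refine ⟨?_, hq'⟩
    have : p' + q = p + q := by rw [← h, hq']
    exact add_right_cancel this
  refine ⟨p, ⟨hp, ?_⟩, q, ⟨hq, ?_⟩, rfl, uniq⟩
  · intro a ha b hb hseg
    obtain ⟨sa, sb, hsa, hsb, hs1, habp⟩ := hseg
    have hseg' : p + q ∈ openSegment ℝ (a + q) (b + q) := by
      refine ⟨sa, sb, hsa, hsb, hs1, ?_⟩
      rw [smul_add, smul_add]
      have : sa • q + sb • q = q := by rw [← add_smul, hs1, one_smul]
      calc sa • a + sa • q + (sb • b + sb • q)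
          = (sa • a + sb • b) + (sa • q + sb • q) := by abel
        _ = p + q := by rw [habp, this]
    have h1 := hext (Set.add_mem_add ha hq) (Set.add_mem_add hb hq) hseg'
    exact add_right_cancel h1
  · intro a ha b hb hseg
    obtain ⟨sa, sb, hsa, hsb, hs1, habq⟩ := hseg
    have hseg' : p + q ∈ openSegment ℝ (p + a) (p + b) := by
      refine ⟨sa, sb, hsa, hsb, hs1, ?_⟩
      rw [smul_add, smul_add]
      have : sa • p + sb • p = p := by rw [← add_smul, hs1, one_smul]
      calc sa • p + sa • a + (sb • p + sb • b)
          = (sa • p + sb • p) + (sa • a + sb • b) := by abel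
        _ = p + q := by rw [habq, this]
    have h1 := hext (Set.add_mem_add hp ha) (Set.add_mem_add hp hb) hseg'
    exact add_left_cancel h1

/-- For nonzero elements `b₁, b₂` of a quantum torus over an
integral domain, `Newt(b₁ b₂) = Newt(b₁) + Newt(b₂)` (Minkowski sum). -/
theorem statement16 {A : Type*} [CommRing A] [IsDomain A]
    {N ℓ : ℕ} (hℓ : 0 < ℓ) (u : A) (hu : IsPrimitiveRoot u ℓ)
    (Λ : (Fin N → ℤ) →ₗ[ℤ] (Fin N → ℤ) →ₗ[ℤ] ZMod ℓ)
    (hskew : ∀ f g : Fin N → ℤ, Λ f g = - Λ g f)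
    {T : Type*} [Ring T] [Algebra A T]
    (b : Module.Basis (Fin N → ℤ) A T)
    (hone : b 0 = 1)
    (hmul : ∀ f g : Fin N → ℤ, b f * b g = u ^ (Λ f g).val • b (f + g)) :
    ∀ x y : T, x ≠ 0 → y ≠ 0 →
      newtonPolytope b (x * y) = newtonPolytope b x + newtonPolytope b y := by
  intro x y hx hy
  set c : (Fin N → ℤ) →₀ A := b.repr x with hc
  set d : (Fin N → ℤ) →₀ A := b.repr y with hd
  set s : Finset (Fin N → ℤ) := c.support with hs
  set t : Finset (Fin N → ℤ) := d.support with ht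
  have hu0 : ∀ k : ℕ, u ^ k ≠ 0 := fun k => ((hu.isUnit hℓ.ne').pow k).ne_zero
  -- key coefficient formula
  have hxy : x * y = ∑ f ∈ s, ∑ g ∈ t, (c f * d g * u ^ (Λ f g).val) • b (f + g) := by
    conv_lhs => rw [← b.linearCombination_repr x, ← b.linearCombination_repr y]
    rw [Finsupp.linearCombination_apply, Finsupp.linearCombination_apply,
      Finsupp.sum, Finsupp.sum, Finset.sum_mul_sum]
    refine Finset.sum_congr rfl fun f hf => Finset.sum_congr rfl fun g hg => ?_
    rw [smul_mul_smul_comm, hmul, smul_smul]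
  have key : ∀ h : Fin N → ℤ, b.repr (x * y) h =
      ∑ p ∈ s ×ˢ t, if p.1 + p.2 = h then c p.1 * d p.2 * u ^ (Λ p.1 p.2).val else 0 := by
    intro h
    rw [hxy, map_sum, Finset.sum_product]
    rw [Finsupp.finset_sum_apply]
    refine Finset.sum_congr rfl fun f hf => ?_
    rw [map_sum, Finsupp.finset_sum_apply]
    refine Finset.sum_congr rfl fun g hg => ?_
    rw [map_smul, Finsupp.smul_apply, b.repr_self, Finsupp.single_apply]
    split_ifs with h1 <;> simp
  -- support of the product
  have hsupp : ∀ h ∈ (b.repr (x * y)).support, ∃ f ∈ s, ∃ g ∈ t, f + g = h := by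
    intro h hh
    rw [Finsupp.mem_support_iff] at hh
    rw [key h] at hh
    obtain ⟨⟨f, g⟩, hmem, hne⟩ := Finset.exists_ne_zero_of_sum_ne_zero hh
    rw [Finset.mem_product] at hmem
    refine ⟨f, hmem.1, g, hmem.2, ?_⟩
    by_contra hfg
    simp [hfg] at hne
  -- the two polytopes
  set P : Set (Fin N → ℝ) := newtonPolytope b x with hP
  set Q : Set (Fin N → ℝ) := newtonPolytope b y with hQ
  have hPconv : Convex ℝ P := convex_convexHull _ _
  have hQconv : Convex ℝ Q := convex_convexHull _ _
  have hsfin : (toReal '' (s : Set (Fin N → ℤ))).Finite := (s.finite_toSet).image _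
  have htfin : (toReal '' (t : Set (Fin N → ℤ))).Finite := (t.finite_toSet).image _
  have hPcomp : IsCompact P := hsfin.isCompact_convexHull (𝕜 := ℝ)
  have hQcomp : IsCompact Q := htfin.isCompact_convexHull (𝕜 := ℝ)
  have hclosed : IsClosed (newtonPolytope b (x * y)) :=
    (((b.repr (x * y)).support.finite_toSet.image _).isCompact_convexHull (𝕜 := ℝ)).isClosed
  apply Set.Subset.antisymm
  · -- easy inclusion
    apply convexHull_min
    · rintro _ ⟨h, hh, rfl⟩
      obtain ⟨f, hf, g, hg, rfl⟩ := hsupp h hh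
      rw [toReal_add]
      exact Set.add_mem_add
        (subset_convexHull ℝ _ (Set.mem_image_of_mem _ hf))
        (subset_convexHull ℝ _ (Set.mem_image_of_mem _ hg))
    · exact hPconv.add hQconv
  · -- hard inclusion via Krein–Milman
    have hext : (P + Q).extremePoints ℝ ⊆ toReal '' ((b.repr (x * y)).support : Set (Fin N → ℤ)) := by
      intro e he
      obtain ⟨p, hp, q, hq, rfl, huniq⟩ := extremePoints_add_decomp he
      have hp' : p ∈ toReal '' (s : Set (Fin N → ℤ)) := extremePoints_convexHull_subset hp
      have hq' : q ∈ toReal '' (t : Set (Fin N → ℤ)) := extremePoints_convexHull_subset hq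
      obtain ⟨p₀, hp₀, rfl⟩ := hp'
      obtain ⟨q₀, hq₀, rfl⟩ := hq'
      have hco : b.repr (x * y) (p₀ + q₀) ≠ 0 := by
        rw [key (p₀ + q₀)]
        rw [Finset.sum_eq_single_of_mem (p₀, q₀) (Finset.mem_product.2 ⟨hp₀, hq₀⟩)]
        · simp only [if_pos rfl]
          exact mul_ne_zero (mul_ne_zero (Finsupp.mem_support_iff.1 hp₀)
            (Finsupp.mem_support_iff.1 hq₀)) (hu0 _)
        · rintro ⟨f, g⟩ hmem hne
          rw [Finset.mem_product] at hmem
          by_cases hfg : f + g = p₀ + q₀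
          · exfalso
            have hfP : toReal f ∈ P :=
              subset_convexHull ℝ _ (Set.mem_image_of_mem _ hmem.1)
            have hgQ : toReal g ∈ Q :=
              subset_convexHull ℝ _ (Set.mem_image_of_mem _ hmem.2)
            have hsum : toReal f + toReal g = toReal p₀ + toReal q₀ := by
              rw [← toReal_add, ← toReal_add, hfg]
            obtain ⟨h1, h2⟩ := huniq _ hfP _ hgQ hsum
            exact hne (by rw [Prod.mk.injEq]; exact ⟨toReal_inj h1, toReal_inj h2⟩)
          · simp [hfg]
      rw [← toReal_add]
      exact Set.mem_image_of_mem _ (Finsupp.mem_support_iff.2 hco)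
    have hKM : closure (convexHull ℝ ((P + Q).extremePoints ℝ)) = P + Q :=
      closure_convexHull_extremePoints (hPcomp.add hQcomp) (hPconv.add hQconv)
    rw [← hKM]
    have h1 : convexHull ℝ ((P + Q).extremePoints ℝ) ⊆ newtonPolytope b (x * y) := by
      apply convexHull_min
      · exact hext.trans (subset_convexHull ℝ _)
      · exact convex_convexHull _ _
    calc closure (convexHull ℝ ((P + Q).extremePoints ℝ))
        ⊆ closure (newtonPolytope b (x * y)) := closure_mono h1
      _ = newtonPolytope b (x * y) := hclosed.closure_eq
end

section
/- Let ε be a primitive ℓ-th root of unity and consider the algebra R over A = k[ε^{1/2}] generated by x_1, x_2, y_1, y_2 subject to: x_2x_1 = ε^{-1}x_1x_2, y_2x_1 = ε x_1y_2, x_2y_1 = ε y_1x_2, x_1y_1 = 1 + ε^{1/2}x_2, y_1x_1 = 1 + ε^{-1/2}x_2, x_2y_2 = 1 + ε^{-1/2}x_1, y_2x_2 = 1 + ε^{1/2}x_1, y_2y_1 = ε^{-1}y_1y_2 + (1 − ε^{-1}). Then R is spanned over A by the monomials y_1^{m_1} x_1^{n_1} x_2^{n_2} y_2^{m_2} with m_1,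 n_1, n_2, m_2 ∈ N and min(m_1,n_1) = min(m_2,n_2) = 0. -/
/-- Let `ε^{1/2} = s` be a primitive `ℓ`-th root of unity,
`ε = s²`, and let `R` be an `A`-algebra (over `A = k[ε^{1/2}]`) generated by
`x₁, x₂, y₁, y₂` subject to the listed relations.  Then `R` is spanned over `A`
by the monomials `y₁^{m₁} x₁^{n₁} x₂^{n₂} y₂^{m₂}` with
`min(m₁, n₁) = min(m₂, n₂) = 0`. -/
theorem statement18 {A : Type*} [CommRing A] [IsDomain A] [CharZero A]
    {ℓ : ℕ} (hℓ : 0 < ℓ)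
    (s si ε εi : A) (hs : IsPrimitiveRoot s ℓ)
    (hε : ε = s ^ 2) (hsi : s * si = 1) (hεi : ε * εi = 1)
    {R : Type*} [Ring R] [Algebra A R]
    (x1 x2 y1 y2 : R)
    (hgen : Algebra.adjoin A {x1, x2, y1, y2} = ⊤)
    (r1 : x2 * x1 = εi • (x1 * x2))
    (r2 : y2 * x1 = ε • (x1 * y2))
    (r3 : x2 * y1 = ε • (y1 * x2))
    (r4 : x1 * y1 = 1 + s • x2)
    (r5 : y1 * x1 = 1 + si • x2)
    (r6 : x2 * y2 = 1 + si • x1)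
    (r7 : y2 * x2 = 1 + s • x1)
    (r8 : y2 * y1 = εi • (y1 * y2) + (1 - εi) • (1 : R)) :
    ∀ r : R, r ∈ Submodule.span A
      {m : R | ∃ m1 n1 n2 m2 : ℕ, min m1 n1 = 0 ∧ min m2 n2 = 0 ∧
        m = y1 ^ m1 * x1 ^ n1 * x2 ^ n2 * y2 ^ m2} := by
  set S : Submodule A R := Submodule.span A
      {m : R | ∃ m1 n1 n2 m2 : ℕ, min m1 n1 = 0 ∧ min m2 n2 = 0 ∧
        m = y1 ^ m1 * x1 ^ n1 * x2 ^ n2 * y2 ^ m2} with hSdef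
  set S' : Submodule A R :=
    Submodule.span A {m : R | ∃ a b c d : ℕ, m = y1 ^ a * x1 ^ b * x2 ^ c * y2 ^ d} with hS'def
  have hM : ∀ a b c d : ℕ, y1 ^ a * x1 ^ b * x2 ^ c * y2 ^ d ∈ S' := fun a b c d =>
    Submodule.subset_span ⟨a, b, c, d, rfl⟩
  -- commutation lemmas
  have c1 : ∀ n : ℕ, x2 * x1 ^ n = εi ^ n • (x1 ^ n * x2) := by
    intro n; induction n with
    | zero => simp
    | succ n ih =>
      rw [pow_succ' x1, ← mul_assoc, r1, smul_mul_assoc, mul_assoc, ih,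
        mul_smul_comm, smul_smul, ← pow_succ' εi, ← mul_assoc]
  have c1' : ∀ n : ℕ, x2 ^ n * x1 = εi ^ n • (x1 * x2 ^ n) := by
    intro n; induction n with
    | zero => simp
    | succ n ih =>
      rw [pow_succ' x2, mul_assoc, ih, mul_smul_comm, ← mul_assoc, r1,
        smul_mul_assoc, smul_smul, mul_assoc, ← pow_succ εi]
  have c2 : ∀ n : ℕ, y2 * x1 ^ n = ε ^ n • (x1 ^ n * y2) := by
    intro n; induction n with
    | zero => simp
    | succ n ih =>
      rw [pow_succ' x1, ← mul_assoc, r2, smul_mul_assoc, mul_assoc, ih,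
        mul_smul_comm, smul_smul, ← pow_succ' ε, ← mul_assoc]
  have c3 : ∀ n : ℕ, x2 * y1 ^ n = ε ^ n • (y1 ^ n * x2) := by
    intro n; induction n with
    | zero => simp
    | succ n ih =>
      rw [pow_succ' y1, ← mul_assoc, r3, smul_mul_assoc, mul_assoc, ih,
        mul_smul_comm, smul_smul, ← pow_succ' ε, ← mul_assoc]
  have w1 : ∀ (n : ℕ) (z : R), x1 ^ n * (x1 * z) = x1 * (x1 ^ n * z) := by
    intro n z; rw [← mul_assoc, ← pow_succ, pow_succ', mul_assoc]
  have w2 : ∀ (n : ℕ) (z : R), x2 ^ n * (x2 * z) = x2 * (x2 ^ n * z) := by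
    intro n z; rw [← mul_assoc, ← pow_succ, pow_succ', mul_assoc]
  have w3 : ∀ (n : ℕ) (z : R), y1 ^ n * (y1 * z) = y1 * (y1 ^ n * z) := by
    intro n z; rw [← mul_assoc, ← pow_succ, pow_succ', mul_assoc]
  have w4 : ∀ (n : ℕ) (z : R), y2 ^ n * (y2 * z) = y2 * (y2 ^ n * z) := by
    intro n z; rw [← mul_assoc, ← pow_succ, pow_succ', mul_assoc]
  have v1 : ∀ n : ℕ, x1 ^ n * x1 = x1 * x1 ^ n := fun n =>
    (pow_succ x1 n).symm.trans (pow_succ' x1 n)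
  have v2 : ∀ n : ℕ, x2 ^ n * x2 = x2 * x2 ^ n := fun n =>
    (pow_succ x2 n).symm.trans (pow_succ' x2 n)
  have v3 : ∀ n : ℕ, y1 ^ n * y1 = y1 * y1 ^ n := fun n =>
    (pow_succ y1 n).symm.trans (pow_succ' y1 n)
  have v4 : ∀ n : ℕ, y2 ^ n * y2 = y2 * y2 ^ n := fun n =>
    (pow_succ y2 n).symm.trans (pow_succ' y2 n)
  -- left multiplication by generators preserves S'
  have Ly1 : ∀ r ∈ S', y1 * r ∈ S' := by
    intro r hr
    induction hr using Submodule.span_induction with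
    | mem m hm =>
      obtain ⟨a, b, c, d, rfl⟩ := hm
      have : y1 * (y1 ^ a * x1 ^ b * x2 ^ c * y2 ^ d)
          = y1 ^ (a + 1) * x1 ^ b * x2 ^ c * y2 ^ d := by
        rw [pow_succ' y1]; simp only [pow_succ, pow_succ', w1, w2, w3, w4, v1, v2, v3, v4, pow_zero, one_mul, mul_one, mul_smul_comm, smul_mul_assoc, smul_smul, mul_assoc]
      rw [this]; exact hM _ _ _ _
    | zero => simpa using Submodule.zero_mem S'
    | add u v hu hv pu pv => rw [mul_add]; exact Submodule.add_mem _ pu pv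
    | smul a u hu pu => rw [mul_smul_comm]; exact Submodule.smul_mem _ _ pu
  have Lx2m : ∀ a b c d : ℕ, x2 * (y1 ^ a * x1 ^ b * x2 ^ c * y2 ^ d) ∈ S' := by
    intro a b c d
    have : x2 * (y1 ^ a * x1 ^ b * x2 ^ c * y2 ^ d)
        = (ε ^ a * εi ^ b) • (y1 ^ a * x1 ^ b * x2 ^ (c + 1) * y2 ^ d) := by
      calc x2 * (y1 ^ a * x1 ^ b * x2 ^ c * y2 ^ d)
          = (x2 * y1 ^ a) * x1 ^ b * x2 ^ c * y2 ^ d := by simp only [pow_succ, pow_succ', w1, w2, w3, w4, v1, v2, v3, v4, pow_zero, one_mul, mul_one, mul_smul_comm, smul_mul_assoc, smul_smul, mul_assoc]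
        _ = ε ^ a • (y1 ^ a * (x2 * x1 ^ b) * x2 ^ c * y2 ^ d) := by
            rw [c3]; simp only [pow_succ, pow_succ', w1, w2, w3, w4, v1, v2, v3, v4, pow_zero, one_mul, mul_one, mul_smul_comm, smul_mul_assoc, smul_smul, mul_assoc]
        _ = (ε ^ a * εi ^ b) • (y1 ^ a * x1 ^ b * x2 ^ (c + 1) * y2 ^ d) := by
            rw [c1]; simp only [pow_succ, pow_succ', w1, w2, w3, w4, v1, v2, v3, v4, pow_zero, one_mul, mul_one, mul_smul_comm, smul_mul_assoc, smul_smul, mul_assoc]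
    rw [this]; exact Submodule.smul_mem _ _ (hM _ _ _ _)
  have Lx2 : ∀ r ∈ S', x2 * r ∈ S' := by
    intro r hr
    induction hr using Submodule.span_induction with
    | mem m hm => obtain ⟨a, b, c, d, rfl⟩ := hm; exact Lx2m a b c d
    | zero => simpa using Submodule.zero_mem S'
    | add u v hu hv pu pv => rw [mul_add]; exact Submodule.add_mem _ pu pv
    | smul a u hu pu => rw [mul_smul_comm]; exact Submodule.smul_mem _ _ pu
  have Lx1 : ∀ r ∈ S', x1 * r ∈ S' := by
    intro r hr
    induction hr using Submodule.span_induction with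
    | mem m hm =>
      obtain ⟨a, b, c, d, rfl⟩ := hm
      match a with
      | 0 =>
        have : x1 * (y1 ^ 0 * x1 ^ b * x2 ^ c * y2 ^ d)
            = y1 ^ 0 * x1 ^ (b + 1) * x2 ^ c * y2 ^ d := by
          rw [pow_succ' x1]; simp only [pow_succ, pow_succ', w1, w2, w3, w4, v1, v2, v3, v4, pow_zero, one_mul, mul_one, mul_smul_comm, smul_mul_assoc, smul_smul, mul_assoc]
        rw [this]; exact hM _ _ _ _
      | a + 1 =>
        have : x1 * (y1 ^ (a + 1) * x1 ^ b * x2 ^ c * y2 ^ d)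
            = y1 ^ a * x1 ^ b * x2 ^ c * y2 ^ d
              + s • (x2 * (y1 ^ a * x1 ^ b * x2 ^ c * y2 ^ d)) := by
          calc x1 * (y1 ^ (a + 1) * x1 ^ b * x2 ^ c * y2 ^ d)
              = (x1 * y1) * (y1 ^ a * x1 ^ b * x2 ^ c * y2 ^ d) := by
                rw [pow_succ' y1]; simp only [pow_succ, pow_succ', w1, w2, w3, w4, v1, v2, v3, v4, pow_zero, one_mul, mul_one, mul_smul_comm, smul_mul_assoc, smul_smul, mul_assoc]
            _ = _ := by rw [r4]; simp [add_mul, smul_mul_assoc]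
        rw [this]
        exact Submodule.add_mem _ (hM _ _ _ _) (Submodule.smul_mem _ _ (Lx2m a b c d))
    | zero => simpa using Submodule.zero_mem S'
    | add u v hu hv pu pv => rw [mul_add]; exact Submodule.add_mem _ pu pv
    | smul a u hu pu => rw [mul_smul_comm]; exact Submodule.smul_mem _ _ pu
  have Ly2m : ∀ a b c d : ℕ, y2 * (y1 ^ a * x1 ^ b * x2 ^ c * y2 ^ d) ∈ S' := by
    intro a
    induction a with
    | zero =>
      intro b c d
      match c with
      | 0 =>
        have : y2 * (y1 ^ 0 * x1 ^ b * x2 ^ 0 * y2 ^ d)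
            = ε ^ b • (y1 ^ 0 * x1 ^ b * x2 ^ 0 * y2 ^ (d + 1)) := by
          simp only [pow_zero, one_mul, mul_one]
          rw [← mul_assoc, c2, smul_mul_assoc, mul_assoc, ← pow_succ' y2]
        rw [this]; exact Submodule.smul_mem _ _ (hM _ _ _ _)
      | c + 1 =>
        have : y2 * (y1 ^ 0 * x1 ^ b * x2 ^ (c + 1) * y2 ^ d)
            = ε ^ b • (y1 ^ 0 * x1 ^ b * x2 ^ c * y2 ^ d)
              + (ε ^ b * s) • (y1 ^ 0 * x1 ^ (b + 1) * x2 ^ c * y2 ^ d) := by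
          simp only [pow_zero, one_mul]
          calc y2 * (x1 ^ b * x2 ^ (c + 1) * y2 ^ d)
              = (y2 * x1 ^ b) * (x2 * x2 ^ c * y2 ^ d) := by rw [pow_succ' x2]; simp only [pow_succ, pow_succ', w1, w2, w3, w4, v1, v2, v3, v4, pow_zero, one_mul, mul_one, mul_smul_comm, smul_mul_assoc, smul_smul, mul_assoc]
            _ = ε ^ b • (x1 ^ b * ((y2 * x2) * (x2 ^ c * y2 ^ d))) := by
                rw [c2]; simp only [pow_succ, pow_succ', w1, w2, w3, w4, v1, v2, v3, v4, pow_zero, one_mul, mul_one, mul_smul_comm, smul_mul_assoc, smul_smul, mul_assoc]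
            _ = _ := by
                rw [r7]; simp only [add_mul, one_mul, mul_add, smul_add]; simp only [pow_succ, pow_succ', w1, w2, w3, w4, v1, v2, v3, v4, pow_zero, one_mul, mul_one, mul_smul_comm, smul_mul_assoc, smul_smul, mul_assoc]
        rw [this]
        exact Submodule.add_mem _ (Submodule.smul_mem _ _ (hM _ _ _ _))
          (Submodule.smul_mem _ _ (hM _ _ _ _))
    | succ a ih =>
      intro b c d
      have : y2 * (y1 ^ (a + 1) * x1 ^ b * x2 ^ c * y2 ^ d)
          = εi • (y1 * (y2 * (y1 ^ a * x1 ^ b * x2 ^ c * y2 ^ d)))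
            + (1 - εi) • (y1 ^ a * x1 ^ b * x2 ^ c * y2 ^ d) := by
        calc y2 * (y1 ^ (a + 1) * x1 ^ b * x2 ^ c * y2 ^ d)
            = (y2 * y1) * (y1 ^ a * x1 ^ b * x2 ^ c * y2 ^ d) := by
              rw [pow_succ' y1]; simp only [pow_succ, pow_succ', w1, w2, w3, w4, v1, v2, v3, v4, pow_zero, one_mul, mul_one, mul_smul_comm, smul_mul_assoc, smul_smul, mul_assoc]
          _ = _ := by
              rw [r8]; simp only [add_mul, smul_mul_assoc, one_mul, mul_assoc]
      rw [this]
      exact Submodule.add_mem _ (Submodule.smul_mem _ _ (Ly1 _ (ih b c d)))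
        (Submodule.smul_mem _ _ (hM _ _ _ _))
  have Ly2 : ∀ r ∈ S', y2 * r ∈ S' := by
    intro r hr
    induction hr using Submodule.span_induction with
    | mem m hm => obtain ⟨a, b, c, d, rfl⟩ := hm; exact Ly2m a b c d
    | zero => simpa using Submodule.zero_mem S'
    | add u v hu hv pu pv => rw [mul_add]; exact Submodule.add_mem _ pu pv
    | smul a u hu pu => rw [mul_smul_comm]; exact Submodule.smul_mem _ _ pu
  -- every element of R is in S'
  have hS'top : ∀ r : R, r ∈ S' := by
    have key : ∀ r : R, ∀ m ∈ S', r * m ∈ S' := by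
      intro r
      have hr : r ∈ Algebra.adjoin A ({x1, x2, y1, y2} : Set R) := by
        rw [hgen]; trivial
      induction hr using Algebra.adjoin_induction with
      | mem g hg =>
        rcases hg with rfl | rfl | rfl | rfl
        · exact Lx1
        · exact Lx2
        · exact Ly1
        · exact Ly2
      | algebraMap a =>
        intro m hm
        rw [Algebra.algebraMap_eq_smul_one, smul_mul_assoc, one_mul]
        exact Submodule.smul_mem _ _ hm
      | add u v hu hv pu pv =>
        intro m hm; rw [add_mul]; exact Submodule.add_mem _ (pu m hm) (pv m hm)
      | mul u v hu hv pu pv =>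
        intro m hm; rw [mul_assoc]; exact pu _ (pv m hm)
    intro r
    have h1 : (1 : R) ∈ S' := by simpa using hM 0 0 0 0
    simpa using key r 1 h1
  -- straightening: S' ≤ S
  have hMS : ∀ N a b c d : ℕ, a + b + c + d ≤ N →
      y1 ^ a * x1 ^ b * x2 ^ c * y2 ^ d ∈ S := by
    intro N
    induction N with
    | zero =>
      intro a b c d h
      obtain ⟨rfl, rfl, rfl, rfl⟩ : a = 0 ∧ b = 0 ∧ c = 0 ∧ d = 0 := by omega
      refine Submodule.subset_span ⟨0, 0, 0, 0, rfl, rfl, ?_⟩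
      simp
    | succ N ih =>
      intro a b c d h
      by_cases hab : min a b = 0
      · by_cases hcd : min c d = 0
        · exact Submodule.subset_span ⟨a, b, c, d, hab, by omega, rfl⟩
        · -- c ≥ 1 and d ≥ 1
          obtain ⟨c, rfl⟩ : ∃ c', c = c' + 1 := ⟨c - 1, by omega⟩
          obtain ⟨d, rfl⟩ : ∃ d', d = d' + 1 := ⟨d - 1, by omega⟩
          have key : y1 ^ a * x1 ^ b * x2 ^ (c + 1) * y2 ^ (d + 1)
              = y1 ^ a * x1 ^ b * x2 ^ c * y2 ^ d
                + (si * εi ^ c) • (y1 ^ a * x1 ^ (b + 1) * x2 ^ c * y2 ^ d) := by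
            calc y1 ^ a * x1 ^ b * x2 ^ (c + 1) * y2 ^ (d + 1)
                = y1 ^ a * x1 ^ b * (x2 ^ c * ((x2 * y2) * y2 ^ d)) := by
                  rw [pow_succ x2, pow_succ' y2]; simp only [pow_succ, pow_succ', w1, w2, w3, w4, v1, v2, v3, v4, pow_zero, one_mul, mul_one, mul_smul_comm, smul_mul_assoc, smul_smul, mul_assoc]
              _ = y1 ^ a * x1 ^ b * (x2 ^ c * y2 ^ d)
                  + si • (y1 ^ a * x1 ^ b * ((x2 ^ c * x1) * y2 ^ d)) := by
                  rw [r6]; simp only [add_mul, one_mul, mul_add, smul_add]; simp only [pow_succ, pow_succ', w1, w2, w3, w4, v1, v2, v3, v4, pow_zero, one_mul, mul_one, mul_smul_comm, smul_mul_assoc, smul_smul, mul_assoc]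
              _ = _ := by
                  rw [c1']; simp only [pow_succ, pow_succ', w1, w2, w3, w4, v1, v2, v3, v4, pow_zero, one_mul, mul_one, mul_smul_comm, smul_mul_assoc, smul_smul, mul_assoc]
          rw [key]
          exact Submodule.add_mem _ (ih a b c d (by omega))
            (Submodule.smul_mem _ _ (ih a (b + 1) c d (by omega)))
      · -- a ≥ 1 and b ≥ 1
        obtain ⟨a, rfl⟩ : ∃ a', a = a' + 1 := ⟨a - 1, by omega⟩
        obtain ⟨b, rfl⟩ : ∃ b', b = b' + 1 := ⟨b - 1, by omega⟩
        have key : y1 ^ (a + 1) * x1 ^ (b + 1) * x2 ^ c * y2 ^ d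
            = y1 ^ a * x1 ^ b * x2 ^ c * y2 ^ d
              + (si * εi ^ b) • (y1 ^ a * x1 ^ b * x2 ^ (c + 1) * y2 ^ d) := by
          calc y1 ^ (a + 1) * x1 ^ (b + 1) * x2 ^ c * y2 ^ d
              = y1 ^ a * ((y1 * x1) * x1 ^ b) * x2 ^ c * y2 ^ d := by
                rw [pow_succ y1, pow_succ' x1]; simp only [pow_succ, pow_succ', w1, w2, w3, w4, v1, v2, v3, v4, pow_zero, one_mul, mul_one, mul_smul_comm, smul_mul_assoc, smul_smul, mul_assoc]
            _ = y1 ^ a * x1 ^ b * x2 ^ c * y2 ^ d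
                + si • (y1 ^ a * (x2 * x1 ^ b) * x2 ^ c * y2 ^ d) := by
                rw [r5]; simp only [add_mul, one_mul, mul_add, smul_add]; simp only [pow_succ, pow_succ', w1, w2, w3, w4, v1, v2, v3, v4, pow_zero, one_mul, mul_one, mul_smul_comm, smul_mul_assoc, smul_smul, mul_assoc]
            _ = _ := by
                rw [c1]; simp only [pow_succ, pow_succ', w1, w2, w3, w4, v1, v2, v3, v4, pow_zero, one_mul, mul_one, mul_smul_comm, smul_mul_assoc, smul_smul, mul_assoc]
        rw [key]
        exact Submodule.add_mem _ (ih a b c d (by omega))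
          (Submodule.smul_mem _ _ (ih a b (c + 1) d (by omega)))
  have hS'S : S' ≤ S := by
    rw [hS'def]
    apply Submodule.span_le.mpr
    rintro m ⟨a, b, c, d, rfl⟩
    exact hMS (a + b + c + d) a b c d le_rfl
  intro r
  exact hS'S (hS'top r)
end
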